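/- arXiv:2008.04440 — 7 statements merged into one kernel-verified Lean document; each statement's English description precedes it below -/
import Mathlib

section
/- Let B, k, n, μ be integers satisfying B² + μ² = kn. Then both quadruples (−B, B+k, B+n, B+k+n−2μ) and (−B, B+k, B+n, B+k+n+2μ) satisfy Descartes' circle equation 2(a² + b² + c² + d²) = (a + b + c + d)². -/
theorem master_eq_gives_descartes (B k n μ : ℤ) (h : B ^ 2 + μ ^ 2 = k * n) :
    (2 * ((-B) ^ 2 + (B + k) ^ 2 + (B + n) ^ 2 + (B + k + n - 2 * μ) ^ 2) =
        (-B + (B + k) + (B + n) + (B + k + n - 2 * μ)) ^ 2) ∧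
    (2 * ((-B) ^ 2 + (B + k) ^ 2 + (B + n) ^ 2 + (B + k + n + 2 * μ) ^ 2) =
        (-B + (B + k) + (B + n) + (B + k + n + 2 * μ)) ^ 2) := by constructor <;> nlinarith [h, sq_nonneg B, sq_nonneg μ]
end

section
/- Let B, k, n, d be integers such that the quadruple (−B, B+k, B+n, d) satisfies Descartes' circle equation 2(B² + (B+k)² + (B+n)² + d²) = (−B + (B+k) + (B+n) + d)². Then there exists an integer μ such that d = B + k + n − 2μ and B² + μ² = kn. -/
theorem descartes_gives_master (B k n d : ℤ)
    (h : 2 * (B ^ 2 + (B + k) ^ 2 + (B + n) ^ 2 + d ^ 2) =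
        (-B + (B + k) + (B + n) + d) ^ 2) :
    ∃ μ : ℤ, d = B + k + n - 2 * μ ∧ B ^ 2 + μ ^ 2 = k * n := by
  have h2 : Even ((-B + (B + k) + (B + n) + d) ^ 2) :=
    ⟨B ^ 2 + (B + k) ^ 2 + (B + n) ^ 2 + d ^ 2, by linarith⟩
  obtain ⟨m, hm⟩ : Even (-B + (B + k) + (B + n) + d) :=
    (Int.even_pow.mp h2).1
  have hd : d = 2 * m - B - k - n := by omega
  subst hd
  refine ⟨m - (2 * m - B - k - n), by ring, ?_⟩
  have h4 : 4 * (B ^ 2 + (m - (2 * m - B - k - n)) ^ 2) = 4 * (k * n) := by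
    linear_combination h
  linarith
end

section
/- Let B, k, n, μ be natural numbers satisfying B² + μ² = kn. Then gcd(B, gcd(k, n)) = 1 if and only if the greatest common divisor of the five integers B, B+k, B+n, B+k+n−2μ, B+k+n+2μ equals 1. -/
theorem gasket_irreducible_iff (B k n μ : ℕ) (h : B ^ 2 + μ ^ 2 = k * n) :
    Nat.gcd B (Nat.gcd k n) = 1 ↔
      Int.gcd (B : ℤ) (Int.gcd ((B : ℤ) + k) (Int.gcd ((B : ℤ) + n)
        (Int.gcd ((B : ℤ) + k + n - 2 * μ) ((B : ℤ) + k + n + 2 * μ)))) = 1 := by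
  constructor
  · intro h3
    by_contra h5
    obtain ⟨p, hp, hpd⟩ := Nat.exists_prime_and_dvd h5
    have dB : (p : ℤ) ∣ (B : ℤ) :=
      (Int.natCast_dvd_natCast.mpr hpd).trans (Int.gcd_dvd_left _ _)
    have d2 : (p : ℤ) ∣ (Int.gcd ((B : ℤ) + k) (Int.gcd ((B : ℤ) + n)
        (Int.gcd ((B : ℤ) + k + n - 2 * μ) ((B : ℤ) + k + n + 2 * μ))) : ℤ) :=
      (Int.natCast_dvd_natCast.mpr hpd).trans (Int.gcd_dvd_right _ _)
    have dBk : (p : ℤ) ∣ (B : ℤ) + k := d2.trans (Int.gcd_dvd_left _ _)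
    have dBn : (p : ℤ) ∣ (B : ℤ) + n :=
      d2.trans ((Int.gcd_dvd_right _ _).trans (Int.gcd_dvd_left _ _))
    have dk : (p : ℤ) ∣ (k : ℤ) := by
      have := dvd_sub dBk dB; simpa using this
    have dn : (p : ℤ) ∣ (n : ℤ) := by
      have := dvd_sub dBn dB; simpa using this
    have : p ∣ Nat.gcd B (Nat.gcd k n) :=
      Nat.dvd_gcd (by exact_mod_cast dB)
        (Nat.dvd_gcd (by exact_mod_cast dk) (by exact_mod_cast dn))
    rw [h3] at this
    exact hp.one_lt.ne' (Nat.dvd_one.mp this)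
  · intro h5
    by_contra h3
    obtain ⟨p, hp, hpd⟩ := Nat.exists_prime_and_dvd h3
    have pB : p ∣ B := hpd.trans (Nat.gcd_dvd_left _ _)
    have pk : p ∣ k := hpd.trans ((Nat.gcd_dvd_right _ _).trans (Nat.gcd_dvd_left _ _))
    have pn : p ∣ n := hpd.trans ((Nat.gcd_dvd_right _ _).trans (Nat.gcd_dvd_right _ _))
    have pB2 : p ∣ B ^ 2 := dvd_pow pB (by norm_num)
    have pkn : p ∣ B ^ 2 + μ ^ 2 := h ▸ pk.mul_right n
    have pμ2 : p ∣ μ ^ 2 := by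
      have := Nat.dvd_sub pkn pB2; simpa using this
    have pμ : p ∣ μ := hp.dvd_of_dvd_pow pμ2
    have iB : (p : ℤ) ∣ (B : ℤ) := Int.natCast_dvd_natCast.mpr pB
    have ik : (p : ℤ) ∣ (k : ℤ) := Int.natCast_dvd_natCast.mpr pk
    have im : (p : ℤ) ∣ (n : ℤ) := Int.natCast_dvd_natCast.mpr pn
    have iμ : (p : ℤ) ∣ (μ : ℤ) := Int.natCast_dvd_natCast.mpr pμ
    have d1 : (p : ℤ) ∣ (B : ℤ) + k := iB.add ik
    have d2 : (p : ℤ) ∣ (B : ℤ) + n := iB.add im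
    have d3 : (p : ℤ) ∣ (B : ℤ) + k + n - 2 * μ :=
      dvd_sub ((iB.add ik).add im) (iμ.mul_left 2)
    have d4 : (p : ℤ) ∣ (B : ℤ) + k + n + 2 * μ :=
      ((iB.add ik).add im).add (iμ.mul_left 2)
    have : (p : ℤ) ∣ (Int.gcd (B : ℤ) (Int.gcd ((B : ℤ) + k) (Int.gcd ((B : ℤ) + n)
        (Int.gcd ((B : ℤ) + k + n - 2 * μ) ((B : ℤ) + k + n + 2 * μ)))) : ℤ) :=
      Int.dvd_coe_gcd iB (Int.dvd_coe_gcd d1 (Int.dvd_coe_gcd d2 (Int.dvd_coe_gcd d3 d4)))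
    rw [h5] at this
    have : p ∣ 1 := by exact_mod_cast this
    exact hp.one_lt.ne' (Nat.dvd_one.mp this)
end

section
/- Let B, k, n, μ be real numbers with B > 0, k > 0, n > 0, μ ≥ 0, 2μ ≤ k, and B² + μ² = kn. Set b₂ = B + n, b₃ = B + k + n − 2μ, b₄ = B + k + n + 2μ, and define points in the plane: c₂ = ((B² − μ²)/(Bk b₂), 2μ/(k b₂)), c₃ = ((B² − (k−μ)²)/(Bk b₃), −2(k−μ)/(k b₃)), c₄ = ((B² − (k+μ)²)/(Bk b₄), 2(k+μ)/(k b₄)). Then for each i ∈ {2,3,4}, the distance from the origin to cᵢ equals 1/B − 1/bᵢ; that is, each circle of radius 1/bᵢ centered at cᵢ is internally tangent to the circle of radius 1/B centered at the origin. -/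
lemma dist_aux (B b x y : ℝ) (hB : 0 < B) (hb : B < b)
    (hxy : x ^ 2 + y ^ 2 = ((b - B) / (B * b)) ^ 2) :
    dist (0 : EuclideanSpace ℝ (Fin 2)) (WithLp.toLp 2 ![x, y]) = 1 / B - 1 / b := by
  have hb0 : 0 < b := hB.trans hb
  have h1 : (1 : ℝ) / B - 1 / b = (b - B) / (B * b) := by field_simp
  rw [EuclideanSpace.dist_eq]
  simp only [Fin.sum_univ_two, Matrix.cons_val_zero, Matrix.cons_val_one, Matrix.head_cons,
    PiLp.zero_apply, PiLp.toLp_apply, Real.dist_eq, zero_sub, abs_neg, sq_abs]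
  rw [hxy, h1, Real.sqrt_sq (div_nonneg (by linarith) (by positivity))]

theorem inner_tangency (B k n μ : ℝ) (hB : 0 < B) (hk : 0 < k) (hn : 0 < n)
    (hμ : 0 ≤ μ) (hμk : 2 * μ ≤ k) (h : B ^ 2 + μ ^ 2 = k * n) :
    let b₂ := B + n
    let b₃ := B + k + n - 2 * μ
    let b₄ := B + k + n + 2 * μ
    let c₂ : EuclideanSpace ℝ (Fin 2) :=
      WithLp.toLp 2 ![(B ^ 2 - μ ^ 2) / (B * k * b₂), 2 * μ / (k * b₂)]
    let c₃ : EuclideanSpace ℝ (Fin 2) :=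
      WithLp.toLp 2 ![(B ^ 2 - (k - μ) ^ 2) / (B * k * b₃), -(2 * (k - μ)) / (k * b₃)]
    let c₄ : EuclideanSpace ℝ (Fin 2) :=
      WithLp.toLp 2 ![(B ^ 2 - (k + μ) ^ 2) / (B * k * b₄), 2 * (k + μ) / (k * b₄)]
    dist (0 : EuclideanSpace ℝ (Fin 2)) c₂ = 1 / B - 1 / b₂ ∧
    dist (0 : EuclideanSpace ℝ (Fin 2)) c₃ = 1 / B - 1 / b₃ ∧
    dist (0 : EuclideanSpace ℝ (Fin 2)) c₄ = 1 / B - 1 / b₄ := by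
  intro b₂ b₃ b₄ c₂ c₃ c₄
  have hb₂ : B < b₂ := by simp only [b₂]; linarith
  have hb₃ : B < b₃ := by simp only [b₃]; linarith
  have hb₄ : B < b₄ := by simp only [b₄]; linarith
  have h2 : (0:ℝ) < b₂ := hB.trans hb₂
  have h3 : (0:ℝ) < b₃ := hB.trans hb₃
  have h4 : (0:ℝ) < b₄ := hB.trans hb₄
  refine ⟨dist_aux B b₂ _ _ hB hb₂ ?_, dist_aux B b₃ _ _ hB hb₃ ?_,
    dist_aux B b₄ _ _ hB hb₄ ?_⟩
  · simp only [b₂] at *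
    field_simp
    linear_combination (B^2+μ^2+k*n) * h
  · simp only [b₃] at *
    field_simp
    rw [div_left_inj' (pow_pos (by linarith) 2).ne']
    linear_combination (B^2+(k-μ)^2+k*(k+n-2*μ)) * h
  · simp only [b₄] at *
    field_simp
    linear_combination (B^2+(k+μ)^2+k*(k+n+2*μ)) * h
end

section
/- Let B, k, n, μ be real numbers with B > 0, k > 0, n > 0, μ ≥ 0, 2μ ≤ k, and B² + μ² = kn. Set b₂ = B + n, b₃ = B + k + n − 2μ, b₄ = B + k + n + 2μ, and define points in the plane: c₂ = ((B² − μ²)/(Bk b₂), 2μ/(k b₂)), c₃ = ((B² − (k−μ)²)/(Bk b₃), −2(k−μ)/(k b₃)), c₄ = ((B² − (k+μ)²)/(Bk b₄), 2(k+μ)/(k b₄)). Then the distance from c₂ to c₃ equals 1/b₂ + 1/b₃, and the distance from c₂ to c₄ equals 1/b₂ + 1/b₄; that is, the circle centered at c₂ of radius 1/b₂ is externally tangent to the circles centered at c₃, c₄ of radii 1/b₃, 1/b₄. -/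
set_option maxHeartbeats 1000000

lemma outer_tangency_aux (x u y v a c p q : ℝ) (ha : a ≠ 0) (hc : c ≠ 0)
    (hp : p ≠ 0) (hq : q ≠ 0)
    (hkey : ((x * q - u * p) * c) ^ 2 + ((y * q - v * p) * a) ^ 2
      = ((q + p) * (a * c)) ^ 2) :
    (x / (a * p) - u / (a * q)) ^ 2 + (y / (c * p) - v / (c * q)) ^ 2
      = (1 / p + 1 / q) ^ 2 := by
  have h1 : x / (a * p) - u / (a * q) = ((x * q - u * p) * c) / (a * c * p * q) := by
    field_simp
  have h2 : y / (c * p) - v / (c * q) = ((y * q - v * p) * a) / (a * c * p * q) := by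
    field_simp
  have h3 : 1 / p + 1 / q = ((q + p) * (a * c)) / (a * c * p * q) := by
    field_simp
  rw [h1, h2, h3, div_pow, div_pow, div_pow, ← add_div, hkey]

theorem outer_tangency (B k n μ : ℝ) (hB : 0 < B) (hk : 0 < k) (hn : 0 < n)
    (hμ : 0 ≤ μ) (hμk : 2 * μ ≤ k) (h : B ^ 2 + μ ^ 2 = k * n) :
    let b₂ := B + n
    let b₃ := B + k + n - 2 * μ
    let b₄ := B + k + n + 2 * μ
    let c₂ : EuclideanSpace ℝ (Fin 2) :=
      !₂[(B ^ 2 - μ ^ 2) / (B * k * b₂), 2 * μ / (k * b₂)]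
    let c₃ : EuclideanSpace ℝ (Fin 2) :=
      !₂[(B ^ 2 - (k - μ) ^ 2) / (B * k * b₃), -(2 * (k - μ)) / (k * b₃)]
    let c₄ : EuclideanSpace ℝ (Fin 2) :=
      !₂[(B ^ 2 - (k + μ) ^ 2) / (B * k * b₄), 2 * (k + μ) / (k * b₄)]
    dist c₂ c₃ = 1 / b₂ + 1 / b₃ ∧ dist c₂ c₄ = 1 / b₂ + 1 / b₄ := by
  intro b₂ b₃ b₄ c₂ c₃ c₄
  have hb2 : 0 < b₂ := by positivity
  have hb3 : 0 < b₃ := by simp only [b₃]; linarith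
  have hb4 : 0 < b₄ := by simp only [b₄]; linarith
  have key : ∀ x y r : ℝ, 0 ≤ r → x ^ 2 + y ^ 2 = r ^ 2 →
      Real.sqrt (x ^ 2 + y ^ 2) = r := by
    intro x y r hr he
    rw [he, Real.sqrt_sq hr]
  have hd : ∀ u v : EuclideanSpace ℝ (Fin 2),
      dist u v = Real.sqrt ((u 0 - v 0) ^ 2 + (u 1 - v 1) ^ 2) := by
    intro u v
    rw [EuclideanSpace.dist_eq, Fin.sum_univ_two]
    simp [Real.dist_eq, sq_abs]
  constructor
  · rw [hd]
    apply key _ _ _ (by positivity)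
    show ((B ^ 2 - μ ^ 2) / (B * k * b₂) - (B ^ 2 - (k - μ) ^ 2) / (B * k * b₃)) ^ 2 +
        (2 * μ / (k * b₂) - -(2 * (k - μ)) / (k * b₃)) ^ 2 = (1 / b₂ + 1 / b₃) ^ 2
    exact outer_tangency_aux _ _ _ _ _ _ _ _ (by positivity) (ne_of_gt hk)
      (ne_of_gt hb2) (ne_of_gt hb3) (by
        simp only [b₂, b₃]
        linear_combination (4*k^2*μ^4 - 4*k^3*μ^3 - 4*k^3*n*μ^2 + k^4*μ^2 + 4*k^4*n*μ
          - k^5*n - 8*B*k^3*μ^2 + 8*B*k^4*μ - 2*B*k^5 + 4*B^2*k^2*μ^2 - 4*B^2*k^3*μ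
          + B^2*k^4) * h)
  · rw [hd]
    apply key _ _ _ (by positivity)
    show ((B ^ 2 - μ ^ 2) / (B * k * b₂) - (B ^ 2 - (k + μ) ^ 2) / (B * k * b₄)) ^ 2 +
        (2 * μ / (k * b₂) - 2 * (k + μ) / (k * b₄)) ^ 2 = (1 / b₂ + 1 / b₄) ^ 2
    exact outer_tangency_aux _ _ _ _ _ _ _ _ (by positivity) (ne_of_gt hk)
      (ne_of_gt hb2) (ne_of_gt hb4) (by
        simp only [b₂, b₄]
        linear_combination (4*k^2*μ^4 + 4*k^3*μ^3 - 4*k^3*n*μ^2 + k^4*μ^2 - 4*k^4*n*μ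
          - k^5*n - 8*B*k^3*μ^2 - 8*B*k^4*μ - 2*B*k^5 + 4*B^2*k^2*μ^2 + 4*B^2*k^3*μ
          + B^2*k^4) * h)
end

section
/- Let B, k, n, μ be natural numbers with k ≠ 0 and B² + μ² = kn. If k divides 2B², then k divides 2μ² and k divides 2Bμ. -/
theorem divisibility_transfer (B k n μ : ℕ) (hk : k ≠ 0)
    (h : B ^ 2 + μ ^ 2 = k * n) (hdvd : k ∣ 2 * B ^ 2) :
    k ∣ 2 * μ ^ 2 ∧ k ∣ 2 * B * μ := by
  have h1 : k ∣ 2 * μ ^ 2 := by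
    have : 2 * μ ^ 2 = 2 * (k * n) - 2 * B ^ 2 := by omega
    rw [this]
    exact Nat.dvd_sub (Dvd.dvd.mul_left ⟨n, rfl⟩ 2) hdvd
  refine ⟨h1, ?_⟩
  have hsq : k ^ 2 ∣ (2 * B * μ) ^ 2 := by
    have : (2 * B * μ) ^ 2 = (2 * B ^ 2) * (2 * μ ^ 2) := by ring
    rw [this]
    rw [sq k]
    exact mul_dvd_mul hdvd h1
  exact (Nat.pow_dvd_pow_iff two_ne_zero).mp hsq
end

section
/- Let B, k, n, μ be integers with k > 0, B² + μ² = kn, and k ∣ 2B². Then each of the following four triples consists of integers and satisfies Δ² + Γ² = H²: (n − 2B²/k, 2μB/k, n); (k + n − 2μ − 2B²/k, 2B − 2μB/k, k + n − 2μ); (2B + k − n + 2B²/k, 2μ + 2μB/k, 2B + k + n); and (2B + k − 2μ − 4Bμ/k, 2(B − n + μ + 2B²/k), 2B + 2n + k − 2μ). Equivalently, there exist integers Δ, Γ for each triple with kΔ and kΓ equal to k times the displayed rational values, and Δ² + Γ² = H². -/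
theorem integer_pythagorean_triples (B k n μ : ℤ) (hk : 0 < k)
    (h : B ^ 2 + μ ^ 2 = k * n) (hdvd : k ∣ 2 * B ^ 2) :
    (∃ Δ Γ : ℤ, k * Δ = k * n - 2 * B ^ 2 ∧ k * Γ = 2 * μ * B ∧
      Δ ^ 2 + Γ ^ 2 = n ^ 2) ∧
    (∃ Δ Γ : ℤ, k * Δ = k * (k + n - 2 * μ) - 2 * B ^ 2 ∧
      k * Γ = 2 * B * k - 2 * μ * B ∧
      Δ ^ 2 + Γ ^ 2 = (k + n - 2 * μ) ^ 2) ∧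
    (∃ Δ Γ : ℤ, k * Δ = k * (2 * B + k - n) + 2 * B ^ 2 ∧
      k * Γ = 2 * μ * k + 2 * μ * B ∧
      Δ ^ 2 + Γ ^ 2 = (2 * B + k + n) ^ 2) ∧
    (∃ Δ Γ : ℤ, k * Δ = k * (2 * B + k - 2 * μ) - 4 * B * μ ∧
      k * Γ = 2 * k * (B - n + μ) + 4 * B ^ 2 ∧
      Δ ^ 2 + Γ ^ 2 = (2 * B + 2 * n + k - 2 * μ) ^ 2) := by
  have hk0 : (k : ℤ) ≠ 0 := hk.ne'
  have hk2 : (k ^ 2 : ℤ) ≠ 0 := pow_ne_zero 2 hk0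
  obtain ⟨d, hd⟩ := hdvd
  have hmu2 : k ∣ 2 * μ ^ 2 := ⟨2 * n - d, by linarith [hd]⟩
  have he : k ∣ 2 * μ * B := by
    have hsq : k ^ 2 ∣ (2 * μ * B) ^ 2 := by
      obtain ⟨m, hm⟩ := hmu2
      refine ⟨m * d, ?_⟩
      have : (2 * μ * B) ^ 2 = (2 * μ ^ 2) * (2 * B ^ 2) := by ring
      rw [this, hm, hd]; ring
    exact (Int.pow_dvd_pow_iff two_ne_zero).mp hsq
  obtain ⟨e, heq⟩ := he
  have cancel : ∀ x y : ℤ, k ^ 2 * x = k ^ 2 * y → x = y := fun x y hxy =>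
    mul_left_cancel₀ hk2 hxy
  refine ⟨⟨n - d, e, by linarith [hd], heq.symm, ?_⟩,
          ⟨k + n - 2 * μ - d, 2 * B - e, by linarith [hd], by linarith [heq], ?_⟩,
          ⟨2 * B + k - n + d, 2 * μ + e, by linarith [hd], by linarith [heq], ?_⟩,
          ⟨2 * B + k - 2 * μ - 2 * e, 2 * (B - n + μ) + 2 * d,
            by linarith [heq], by linarith [hd], ?_⟩⟩
  · apply cancel
    have h1 : k * (n - d) = k * n - 2 * B ^ 2 := by linarith [hd]
    have h2 : k * e = 2 * μ * B := heq.symm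
    linear_combination (k * (n - d) + (k * n - 2 * B ^ 2)) * h1 +
      (k * e + 2 * μ * B) * h2 + 4 * B ^ 2 * h
  · apply cancel
    have h1 : k * (k + n - 2 * μ - d) = k * (k + n - 2 * μ) - 2 * B ^ 2 := by
      linarith [hd]
    have h2 : k * (2 * B - e) = 2 * B * k - 2 * μ * B := by linarith [heq]
    linear_combination (k * (k + n - 2 * μ - d) + (k * (k + n - 2 * μ) - 2 * B ^ 2)) * h1 +
      (k * (2 * B - e) + (2 * B * k - 2 * μ * B)) * h2 + 4 * B ^ 2 * h
  · apply cancel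
    have h1 : k * (2 * B + k - n + d) = k * (2 * B + k - n) + 2 * B ^ 2 := by
      linarith [hd]
    have h2 : k * (2 * μ + e) = 2 * μ * k + 2 * μ * B := by linarith [heq]
    linear_combination (k * (2 * B + k - n + d) + (k * (2 * B + k - n) + 2 * B ^ 2)) * h1 +
      (k * (2 * μ + e) + (2 * μ * k + 2 * μ * B)) * h2 +
      (4 * k * (2 * B + k) + 4 * B ^ 2) * h
  · apply cancel
    have h1 : k * (2 * B + k - 2 * μ - 2 * e) = k * (2 * B + k - 2 * μ) - 4 * B * μ := by
      linarith [heq]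
    have h2 : k * (2 * (B - n + μ) + 2 * d) = 2 * k * (B - n + μ) + 4 * B ^ 2 := by
      linarith [hd]
    linear_combination (k * (2 * B + k - 2 * μ - 2 * e) + (k * (2 * B + k - 2 * μ) - 4 * B * μ)) * h1 +
      (k * (2 * (B - n + μ) + 2 * d) + (2 * k * (B - n + μ) + 4 * B ^ 2)) * h2 +
      (16 * k * B + 16 * B ^ 2 + 4 * k ^ 2) * h
end
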